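/- arXiv:1103.0262 — 5 statements merged into one kernel-verified Lean document; each statement's English description precedes it below -/
import Mathlib

section
/- If W is a subalgebra of the algebra of complex V×V matrices that is closed under Hadamard (entrywise) multiplication, closed under conjugate transpose, and contains the identity matrix I and the all-ones matrix J, then W has a basis consisting of 0-1 matrices whose sum is J, and this basis of 0-1 matrices is unique. -/
open Matrix

/-- The all-ones matrix `J`. -/
def allOnes (V : Type*) : Matrix V V ℂ := Matrix.of fun _ _ => (1 : ℂ)

/-- A cellular algebra: a subalgebra of `Matrix V V ℂ` (hence containing `I`) that is
closed under Hadamard (entrywise) product and conjugate transpose, and contains the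
all-ones matrix `J`. -/
def IsCellular {V : Type*} [Fintype V] [DecidableEq V]
    (W : Subalgebra ℂ (Matrix V V ℂ)) : Prop :=
  (∀ A ∈ W, ∀ B ∈ W, A ⊙ B ∈ W) ∧ (∀ A ∈ W, Aᴴ ∈ W) ∧ allOnes V ∈ W

/-- A 0-1 matrix. -/
def Is01 {V : Type*} (M : Matrix V V ℂ) : Prop := ∀ u v, M u v = 0 ∨ M u v = 1

/-- `R` is a basis of `W` consisting of 0-1 matrices, whose sum is the all-ones matrix. -/
def IsStdBasis {V : Type*} [Fintype V] [DecidableEq V]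
    (W : Subalgebra ℂ (Matrix V V ℂ)) (R : Finset (Matrix V V ℂ)) : Prop :=
  (∀ M ∈ R, Is01 M) ∧ (↑R ⊆ (W : Set (Matrix V V ℂ))) ∧
    LinearIndependent ℂ ((↑) : (↑R : Set (Matrix V V ℂ)) → Matrix V V ℂ) ∧
    Submodule.span ℂ (↑R : Set (Matrix V V ℂ)) = Subalgebra.toSubmodule W ∧
    ∑ M ∈ R, M = allOnes V

namespace CellularProof

open scoped Classical

variable {V : Type*} [Fintype V] [DecidableEq V] (W : Subalgebra ℂ (Matrix V V ℂ))

/-- The equivalence relation on positions: all matrices of `W` agree. -/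
def r (p q : V × V) : Prop := ∀ M ∈ W, M p.1 p.2 = M q.1 q.2

/-- `r` as a setoid. -/
def sd : Setoid (V × V) :=
  ⟨r W, ⟨fun _ _ _ => rfl, fun h M hM => (h M hM).symm,
    fun h1 h2 M hM => (h1 M hM).trans (h2 M hM)⟩⟩

/-- The indicator matrix of the class of `p`. -/
noncomputable def E (p : V × V) : Matrix V V ℂ :=
  Matrix.of fun u v => if r W p (u, v) then 1 else 0

lemma E_apply (p : V × V) (u v : V) : E W p u v = if r W p (u, v) then 1 else 0 := rfl

lemma E_self (p : V × V) : E W p p.1 p.2 = 1 := by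
  simp [E_apply, r]

lemma r_iff_of_mem {M : Matrix V V ℂ} (hM : M ∈ W) {p q : V × V} (h : r W p q) :
    M p.1 p.2 = M q.1 q.2 := h M hM

lemma E_eq_iff {p q : V × V} : E W p = E W q ↔ r W p q := by
  constructor
  · intro h
    by_contra hr
    have h1 : E W p q.1 q.2 = E W q q.1 q.2 := by rw [h]
    have h2 : E W q q.1 q.2 = 1 := E_self W q
    have h3 : E W p q.1 q.2 = 0 := by
      rw [E_apply, if_neg]
      intro hx
      exact hr fun M hM => hx M hM
    rw [h1, h2] at h3
    exact one_ne_zero h3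
  · intro h
    funext u v
    rw [E_apply, E_apply]
    have : r W p (u, v) ↔ r W q (u, v) := by
      constructor
      · intro h2 M hM; exact ((h M hM).symm).trans (h2 M hM)
      · intro h2 M hM; exact (h M hM).trans (h2 M hM)
    simp [this]

lemma is01_E (p : V × V) : Is01 (E W p) := by
  intro u v
  rw [E_apply]
  by_cases h : r W p (u, v) <;> simp [h]

/-- A finite Hadamard product of elements of `W` (entrywise, over a finset) lies in `W`,
given closure under Hadamard products and `J ∈ W`. -/
lemma hadamard_prod_mem (hW : IsCellular W) {ι : Type*} (S : Finset ι)
    (g : ι → Matrix V V ℂ) (hg : ∀ i ∈ S, g i ∈ W) :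
    (Matrix.of fun u v => ∏ i ∈ S, g i u v) ∈ W := by
  induction S using Finset.cons_induction with
  | empty =>
      have : (Matrix.of fun (u v : V) => ∏ i ∈ (∅ : Finset ι), g i u v) = allOnes V := by
        funext u v; simp [allOnes]
      rw [this]; exact hW.2.2
  | cons a S ha ih =>
      have h1 : g a ∈ W := hg a (Finset.mem_cons_self a S)
      have h2 : (Matrix.of fun u v => ∏ i ∈ S, g i u v) ∈ W :=
        ih fun i hi => hg i (Finset.mem_cons_of_mem hi)
      have : (Matrix.of fun u v => ∏ i ∈ Finset.cons a S ha, g i u v)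
          = g a ⊙ (Matrix.of fun u v => ∏ i ∈ S, g i u v) := by
        funext u v
        simp [Matrix.hadamard, Finset.prod_cons, Finset.prod_insert, ha]
      rw [this]
      exact hW.1 _ h1 _ h2

/-- Membership of the class indicators in `W`, by Lagrange-type interpolation. -/
lemma E_mem (hW : IsCellular W) (p : V × V) : E W p ∈ W := by
  -- for each q not related to p, choose a separating matrix
  have hsep : ∀ q : V × V, ¬ r W p q → ∃ M ∈ W, M p.1 p.2 ≠ M q.1 q.2 := by
    intro q hq
    by_contra h
    push_neg at h
    exact hq fun M hM => h M hM
  choose Msep hMsepW hMsepne using fun q => fun (h : ¬ r W p q) => hsep q h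
  -- the normalized separating matrix : value 1 at p's class, 0 at q's class
  let g : (q : V × V) → Matrix V V ℂ := fun q =>
    if h : ¬ r W p q then
      (Msep q h p.1 p.2 - Msep q h q.1 q.2)⁻¹ •
        (Msep q h - Msep q h q.1 q.2 • allOnes V)
    else allOnes V
  have hgW : ∀ q, g q ∈ W := by
    intro q
    by_cases h : r W p q
    · simp only [g]; rw [dif_neg (not_not_intro h)]; exact hW.2.2
    · simp only [g]; rw [dif_pos h]
      exact Subalgebra.smul_mem W (Subalgebra.sub_mem W (hMsepW q h)
        (Subalgebra.smul_mem W hW.2.2 _)) _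
  have hgp : ∀ q, g q p.1 p.2 = 1 := by
    intro q
    by_cases h : r W p q
    · simp only [g]; rw [dif_neg (not_not_intro h)]; simp [allOnes]
    · simp only [g]; rw [dif_pos h]
      simp only [Matrix.smul_apply, Matrix.sub_apply, allOnes,
        smul_eq_mul, Matrix.of_apply, mul_one]
      exact inv_mul_cancel₀ (sub_ne_zero.mpr (hMsepne q h))
  have hgq : ∀ q (h : ¬ r W p q), g q q.1 q.2 = 0 := by
    intro q h
    simp only [g, dif_pos h, Matrix.smul_apply, Matrix.sub_apply, allOnes,
      smul_eq_mul, Matrix.of_apply, mul_one]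
    simp
  set S : Finset (V × V) := Finset.univ.filter (fun q => ¬ r W p q) with hS
  have key : E W p = Matrix.of fun u v => ∏ q ∈ S, g q u v := by
    funext u v
    rw [E_apply]
    by_cases h : r W p (u, v)
    · rw [if_pos h]
      symm
      apply Finset.prod_eq_one
      intro q _
      have := r_iff_of_mem W (hgW q) h
      simp only [Matrix.of_apply] at this ⊢
      rw [← this, hgp q]
    · rw [if_neg h]
      symm
      apply Finset.prod_eq_zero (i := (u, v))
      · simp [hS, h]
      · exact hgq (u, v) h
  rw [key]
  exact hadamard_prod_mem W hW S g (fun q _ => hgW q)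

noncomputable instance : Fintype (Quotient (sd W)) := Quotient.fintype _

/-- A transversal of the classes. -/
noncomputable def repset : Finset (V × V) :=
  Finset.univ.image (Quotient.out : Quotient (sd W) → V × V)

lemma r_out (u v : V) : r W (Quotient.out (Quotient.mk (sd W) (u, v))) (u, v) := by
  have : Quotient.mk (sd W) (Quotient.out (Quotient.mk (sd W) (u, v)))
      = Quotient.mk (sd W) (u, v) := Quotient.out_eq _
  exact Quotient.exact this

lemma sum_E_out {f : (V × V) → ℂ} (u v : V) :
    ∑ p ∈ repset W, f p * E W p u v = f (Quotient.out (Quotient.mk (sd W) (u, v))) := by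
  rw [repset, Finset.sum_image (fun a _ b _ h => Quotient.out_injective h)]
  rw [Finset.sum_eq_single (Quotient.mk (sd W) (u, v))]
  · rw [E_apply, if_pos (r_out W u v), mul_one]
  · intro b _ hb
    rw [E_apply, if_neg, mul_zero]
    intro hr
    apply hb
    have h1 : Quotient.mk (sd W) (Quotient.out b) = Quotient.mk (sd W) (u, v) :=
      Quotient.sound hr
    rw [Quotient.out_eq] at h1
    exact h1
  · intro h; exact absurd (Finset.mem_univ _) h

lemma sum_E_repset : ∑ p ∈ repset W, E W p = allOnes V := by
  funext u v
  rw [Matrix.sum_apply]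
  have := sum_E_out W (f := fun _ => (1 : ℂ)) u v
  simp only [one_mul] at this
  simpa [allOnes] using this

lemma decomposition {M : Matrix V V ℂ} (hM : M ∈ W) :
    M = ∑ p ∈ repset W, M p.1 p.2 • E W p := by
  funext u v
  rw [Matrix.sum_apply]
  simp only [Matrix.smul_apply, smul_eq_mul]
  rw [sum_E_out W (f := fun p => M p.1 p.2) u v]
  exact (r_iff_of_mem W hM (r_out W u v)).symm

/-- The standard basis. -/
noncomputable def stdR : Finset (Matrix V V ℂ) := (repset W).image (E W)

lemma mem_stdR_iff {M : Matrix V V ℂ} : M ∈ stdR W ↔ ∃ p, E W p = M := by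
  constructor
  · rintro h
    rcases Finset.mem_image.mp h with ⟨p, _, hp⟩
    exact ⟨p, hp⟩
  · rintro ⟨p, hp⟩
    refine Finset.mem_image.mpr ⟨Quotient.out (Quotient.mk (sd W) p), ?_, ?_⟩
    · exact Finset.mem_image.mpr ⟨_, Finset.mem_univ _, rfl⟩
    · rw [← hp]
      apply (E_eq_iff W).mpr
      have h2 : Quotient.mk (sd W) (Quotient.out (Quotient.mk (sd W) p))
          = Quotient.mk (sd W) p := Quotient.out_eq _
      exact Quotient.exact h2

lemma stdR_subset (hW : IsCellular W) : ↑(stdR W) ⊆ (W : Set (Matrix V V ℂ)) := by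
  intro M hM
  rcases (mem_stdR_iff W).mp hM with ⟨p, hp⟩
  rw [← hp]
  exact E_mem W hW p

lemma sum_stdR : ∑ M ∈ stdR W, M = allOnes V := by
  rw [stdR, Finset.sum_image]
  · exact sum_E_repset W
  · intro p hp q hq h
    rcases Finset.mem_image.mp hp with ⟨a, _, ha⟩
    rcases Finset.mem_image.mp hq with ⟨b, _, hb⟩
    subst ha hb
    have : Quotient.mk (sd W) (Quotient.out a) = Quotient.mk (sd W) (Quotient.out b) :=
      Quotient.sound ((E_eq_iff W).mp h)
    rw [Quotient.out_eq, Quotient.out_eq] at this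
    rw [this]

lemma stdR_linearIndependent :
    LinearIndependent ℂ ((↑) : (↑(stdR W) : Set (Matrix V V ℂ)) → Matrix V V ℂ) := by
  rw [Fintype.linearIndependent_iff]
  intro g hg i
  rcases (mem_stdR_iff W).mp i.2 with ⟨p, hp⟩
  have h := congrFun (congrFun hg p.1) p.2
  rw [Matrix.sum_apply] at h
  simp only [Matrix.smul_apply, smul_eq_mul, Matrix.zero_apply] at h
  rw [Fintype.sum_eq_single i] at h
  · rw [← hp, E_self] at h
    simpa using h
  · intro j hj
    rcases (mem_stdR_iff W).mp j.2 with ⟨q, hq⟩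
    rw [← hq, E_apply, if_neg, mul_zero]
    intro hr
    apply hj
    apply Subtype.ext
    rw [← hq, ← hp]
    exact (E_eq_iff W).mpr (fun M hM => (hr M hM).trans (r_iff_of_mem W hM (fun N hN => rfl)))

lemma stdR_span (hW : IsCellular W) :
    Submodule.span ℂ (↑(stdR W) : Set (Matrix V V ℂ)) = Subalgebra.toSubmodule W := by
  apply le_antisymm
  · rw [Submodule.span_le]
    exact stdR_subset W hW
  · intro M hM
    rw [Subalgebra.mem_toSubmodule] at hM
    rw [decomposition W hM]
    apply Submodule.sum_mem
    intro p hp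
    apply Submodule.smul_mem
    apply Submodule.subset_span
    exact (mem_stdR_iff W).mpr ⟨p, rfl⟩

lemma stdR_isStdBasis (hW : IsCellular W) : IsStdBasis W (stdR W) := by
  refine ⟨?_, stdR_subset W hW, stdR_linearIndependent W, stdR_span W hW, sum_stdR W⟩
  intro M hM
  rcases (mem_stdR_iff W).mp hM with ⟨p, hp⟩
  rw [← hp]
  exact is01_E W p

/-- In a std basis, at each position exactly one basis matrix is 1, the rest are 0. -/
lemma exists_cover {R : Finset (Matrix V V ℂ)} (h01 : ∀ M ∈ R, Is01 M)
    (hsum : ∑ M ∈ R, M = allOnes V) (u v : V) :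
    ∃ M ∈ R, M u v = 1 ∧ ∀ N ∈ R, N ≠ M → N u v = 0 := by
  have hs : ∑ M ∈ R, M u v = 1 := by
    have := congrFun (congrFun hsum u) v
    rw [Matrix.sum_apply] at this
    simpa [allOnes] using this
  set s := R.filter (fun M => M u v = 1) with hsdef
  have hcard : ((s.card : ℕ) : ℂ) = 1 := by
    rw [← hs, ← Finset.sum_filter_add_sum_filter_not R (fun M => M u v = 1)]
    rw [Finset.sum_congr rfl (fun M hM => (Finset.mem_filter.mp hM).2)]
    have h2 : ∑ M ∈ R.filter (fun M => ¬ M u v = 1), M u v = 0 := by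
      apply Finset.sum_eq_zero
      intro M hM
      rcases Finset.mem_filter.mp hM with ⟨hMR, hM1⟩
      rcases h01 M hMR u v with h | h
      · exact h
      · exact absurd h hM1
    rw [h2, add_zero, Finset.sum_const, nsmul_eq_mul, mul_one]
  have hone : s.card = 1 := by
    have := hcard
    rw [show (1 : ℂ) = ((1 : ℕ) : ℂ) by norm_num] at this
    exact_mod_cast this
  rcases Finset.card_eq_one.mp hone with ⟨M, hMs⟩
  have hM : M ∈ s := by rw [hMs]; exact Finset.mem_singleton_self M
  rcases Finset.mem_filter.mp hM with ⟨hMR, hM1⟩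
  refine ⟨M, hMR, hM1, ?_⟩
  intro N hNR hNM
  rcases h01 N hNR u v with h | h
  · exact h
  · exfalso
    apply hNM
    have : N ∈ s := Finset.mem_filter.mpr ⟨hNR, h⟩
    rw [hMs] at this
    exact Finset.mem_singleton.mp this

lemma std_basis_unique (hW : IsCellular W) {R : Finset (Matrix V V ℂ)}
    (hR : IsStdBasis W R) : R = stdR W := by
  obtain ⟨h01, hsub, hli, hspan, hsum⟩ := hR
  -- every element of R equals E p for its support points
  have hzero : (0 : Matrix V V ℂ) ∉ R := by
    intro h0
    have := hli.ne_zero ⟨0, h0⟩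
    exact this rfl
  -- key: each M ∈ R with M at p equal to 1 satisfies M = E p
  have hkey : ∀ M ∈ R, ∀ p : V × V, M p.1 p.2 = 1 → M = E W p := by
    intro M hMR p hMp
    have hMW : M ∈ W := hsub hMR
    funext u v
    rw [E_apply]
    by_cases h : r W p (u, v)
    · rw [if_pos h, ← r_iff_of_mem W hMW h, hMp]
    · rw [if_neg h]
      rcases h01 M hMR u v with h0 | h1
      · exact h0
      · -- M u v = 1 and ¬ r p (u,v) : contradiction using E W p ∈ span R
        exfalso
        have hEp : E W p ∈ Submodule.span ℂ (↑R : Set (Matrix V V ℂ)) := by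
          rw [hspan, Subalgebra.mem_toSubmodule]
          exact E_mem W hW p
        rcases Submodule.mem_span_finset.mp hEp with ⟨f, -, hf⟩
        -- evaluate at p : coefficient of M is 1
        have hc1 : f M = 1 := by
          have h1' := congrFun (congrFun hf p.1) p.2
          rw [Matrix.sum_apply] at h1'
          simp only [Matrix.smul_apply, smul_eq_mul] at h1'
          rw [Finset.sum_eq_single_of_mem M hMR] at h1'
          · rw [hMp, mul_one, E_self] at h1'; exact h1'
          · intro N hNR hNM
            rcases exists_cover h01 hsum p.1 p.2 with ⟨M', hM'R, hM'1, hM'0⟩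
            have hMM' : M = M' := by
              by_contra hne
              exact one_ne_zero (hMp ▸ hM'0 M hMR hne)
            rw [hM'0 N hNR (hMM' ▸ hNM), mul_zero]
        -- evaluate at (u,v) : coefficient of M is 0
        have hc0 : f M = 0 := by
          have h1' := congrFun (congrFun hf u) v
          rw [Matrix.sum_apply] at h1'
          simp only [Matrix.smul_apply, smul_eq_mul] at h1'
          rw [Finset.sum_eq_single_of_mem M hMR] at h1'
          · rw [h1, mul_one, E_apply, if_neg h] at h1'; exact h1'
          · intro N hNR hNM
            rcases exists_cover h01 hsum u v with ⟨M', hM'R, hM'1, hM'0⟩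
            have hMM' : M = M' := by
              by_contra hne
              exact one_ne_zero (h1 ▸ hM'0 M hMR hne)
            rw [hM'0 N hNR (hMM' ▸ hNM), mul_zero]
        rw [hc1] at hc0
        exact one_ne_zero hc0
  apply Finset.Subset.antisymm
  · -- R ⊆ stdR
    intro M hMR
    have hMne : M ≠ 0 := fun h => hzero (h ▸ hMR)
    have : ∃ p : V × V, M p.1 p.2 = 1 := by
      by_contra h
      push_neg at h
      apply hMne
      funext u v
      rcases h01 M hMR u v with h0 | h1
      · exact h0
      · exact absurd h1 (h (u, v))
    rcases this with ⟨p, hp⟩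
    rw [hkey M hMR p hp]
    exact (mem_stdR_iff W).mpr ⟨p, rfl⟩
  · -- stdR ⊆ R
    intro N hN
    rcases (mem_stdR_iff W).mp hN with ⟨p, hp⟩
    rcases exists_cover h01 hsum p.1 p.2 with ⟨M, hMR, hM1, _⟩
    have := hkey M hMR p hM1
    rw [← hp, ← this]
    exact hMR

end CellularProof

/-- Every cellular algebra has a unique basis of 0-1 matrices; the sum of this basis
is the all-ones matrix `J`. -/
theorem stmt_0 {V : Type*} [Fintype V] [DecidableEq V]
    (W : Subalgebra ℂ (Matrix V V ℂ)) (hW : IsCellular W) :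
    ∃! R : Finset (Matrix V V ℂ), IsStdBasis W R := by
  exact ⟨CellularProof.stdR W, CellularProof.stdR_isStdBasis W hW,
    fun R hR => CellularProof.std_basis_unique W hW hR⟩
end

section
/- Let φ : W → W′ be a weak isomorphism of cellular algebras. Then for every matrix R ∈ W, the trace of R equals the trace of φ(R). -/
open Matrix

/-- A weak isomorphism between cellular algebras: a bijection from `W` onto `W′`
preserving addition, scalar multiplication, matrix multiplication, Hadamard
multiplication and conjugate transposition. -/
def IsWeakIso {V V2 : Type*} [Fintype V] [DecidableEq V] [Fintype V2] [DecidableEq V2]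
    (W : Subalgebra ℂ (Matrix V V ℂ)) (W2 : Subalgebra ℂ (Matrix V2 V2 ℂ))
    (f : Matrix V V ℂ → Matrix V2 V2 ℂ) : Prop :=
  Set.BijOn f (W : Set (Matrix V V ℂ)) (W2 : Set (Matrix V2 V2 ℂ)) ∧
  (∀ A ∈ W, ∀ B ∈ W, f (A + B) = f A + f B) ∧
  (∀ (c : ℂ), ∀ A ∈ W, f (c • A) = c • f A) ∧
  (∀ A ∈ W, ∀ B ∈ W, f (A * B) = f A * f B) ∧
  (∀ A ∈ W, ∀ B ∈ W, f (A ⊙ B) = f A ⊙ f B) ∧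
  (∀ A ∈ W, f Aᴴ = (f A)ᴴ)


lemma allOnes_mul_diag_mul {V : Type*} [Fintype V] [DecidableEq V] (M : Matrix V V ℂ) :
    allOnes V * (M ⊙ (1 : Matrix V V ℂ)) * allOnes V = M.trace • allOnes V := by
  ext u v
  simp [allOnes, Matrix.mul_apply, Matrix.hadamard, Matrix.trace, Matrix.diag,
    Matrix.one_apply, Finset.sum_mul, mul_ite, Finset.sum_comm]

lemma hadamard_allOnes' {V : Type*} (A : Matrix V V ℂ) : A ⊙ allOnes V = A := by
  ext u v; simp [allOnes, Matrix.hadamard]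

/-- A weak isomorphism of cellular algebras preserves traces. -/
theorem stmt_7 {V V2 : Type*} [Fintype V] [DecidableEq V] [Fintype V2] [DecidableEq V2]
    (W : Subalgebra ℂ (Matrix V V ℂ)) (W2 : Subalgebra ℂ (Matrix V2 V2 ℂ))
    (hW : IsCellular W) (hW2 : IsCellular W2)
    (f : Matrix V V ℂ → Matrix V2 V2 ℂ) (hf : IsWeakIso W W2 f)
    (R : Matrix V V ℂ) (hRW : R ∈ W) :
    (f R).trace = R.trace := by
  obtain ⟨hbij, hadd, hsmul, hmul, hhad, hstar⟩ := hf
  have h1W : (1 : Matrix V V ℂ) ∈ W := W.one_mem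
  have hJW : allOnes V ∈ W := hW.2.2
  have hJ2 : allOnes V2 ∈ W2 := hW2.2.2
  -- f 1 = 1
  have hf1mem : f 1 ∈ W2 := hbij.1 h1W
  have hf1 : f (1 : Matrix V V ℂ) = 1 := by
    have := hmul 1 h1W 1 h1W
    have h2 : ∀ B ∈ W2, f 1 * B = B := by
      intro B hB
      obtain ⟨A, hA, rfl⟩ := hbij.2.2 hB
      rw [← hmul 1 h1W A hA, one_mul]
    -- f 1 is left identity on W2; apply to itself and to 1
    have e1 := h2 (f 1) hf1mem
    have e2 := h2 1 W2.one_mem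
    rw [mul_one] at e2
    exact e2
  -- f J = J
  have hfJmem : f (allOnes V) ∈ W2 := hbij.1 hJW
  have hfJ : f (allOnes V) = allOnes V2 := by
    have h2 : ∀ B ∈ W2, f (allOnes V) ⊙ B = B := by
      intro B hB
      obtain ⟨A, hA, rfl⟩ := hbij.2.2 hB
      have hJA : allOnes V ⊙ A = A := by ext u v; simp [allOnes, Matrix.hadamard]
      rw [← hhad (allOnes V) hJW A hA, hJA]
    have e2 := h2 (allOnes V2) hJ2
    rw [hadamard_allOnes'] at e2
    exact e2
  by_cases hV2 : Nonempty V2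
  · -- main case
    have hRIW : R ⊙ (1 : Matrix V V ℂ) ∈ W := hW.1 R hRW 1 h1W
    have hJRI : allOnes V * (R ⊙ 1) ∈ W := W.mul_mem hJW hRIW
    have key : f (allOnes V * (R ⊙ 1) * allOnes V)
        = allOnes V2 * (f R ⊙ 1) * allOnes V2 := by
      rw [hmul _ hJRI _ hJW, hmul _ hJW _ hRIW, hhad R hRW 1 h1W, hf1, hfJ]
    rw [allOnes_mul_diag_mul, hsmul _ _ hJW, hfJ, allOnes_mul_diag_mul] at key
    obtain ⟨v⟩ := hV2
    have := congrFun (congrFun key v) v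
    simpa [allOnes] using this.symm
  · -- V2 empty: show V empty too
    rw [not_nonempty_iff] at hV2
    have hVempty : IsEmpty V := by
      by_contra hV
      rw [not_isEmpty_iff] at hV
      obtain ⟨v⟩ := hV
      haveI := hV2
      have h10 : f (1 : Matrix V V ℂ) = f 0 := Subsingleton.elim _ _
      have : (1 : Matrix V V ℂ) = 0 := hbij.2.1 h1W W.zero_mem h10
      have := congrFun (congrFun this v) v
      simp [Matrix.one_apply] at this
    simp [Matrix.trace]
end

section
/- Let G and G′ be graphs with adjacency matrices A and A′, and let φ : [G] → [G′] be a weak isomorphism of their cellular closures with φ(A) = A′ (an equivalence from G to G′). For each degree d, let I_d (resp. I′_d) be the diagonal 0-1 matrix supported on vertices of degree d in G (resp. G′). Then I_d ∈ [G], I′_d ∈ [G′], and φ(I_d) = I′_d. -/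
open Matrix

/-- The diagonal 0-1 matrix supported on the vertices of degree `d` in `G`. -/
def degIndicator {V : Type*} [Fintype V] [DecidableEq V]
    (G : SimpleGraph V) [DecidableRel G.Adj] (d : ℕ) : Matrix V V ℂ :=
  Matrix.of fun u v => if u = v ∧ G.degree u = d then 1 else 0


lemma hadamard_one_eq_diag {V : Type*} [Fintype V] [DecidableEq V] (M : Matrix V V ℂ) :
    M ⊙ (1 : Matrix V V ℂ) = Matrix.diagonal (fun u => M u u) := by
  ext u v
  by_cases h : u = v <;> simp [Matrix.hadamard, Matrix.one_apply, Matrix.diagonal, h]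

lemma aeval_diagonal' {V : Type*} [Fintype V] [DecidableEq V] (g : V → ℂ) (p : Polynomial ℂ) :
    Polynomial.aeval (Matrix.diagonal g) p = Matrix.diagonal (fun u => p.eval (g u)) := by
  induction p using Polynomial.induction_on' with
  | add p q hp hq => simp [hp, hq, Matrix.diagonal_add]
  | monomial n c =>
      rw [Polynomial.aeval_monomial, Matrix.algebraMap_eq_diagonal, Matrix.diagonal_pow,
        Matrix.diagonal_mul_diagonal]
      congr 1
      funext u
      simp [Pi.algebraMap_apply]

/-- An equivalence from `G` to `G′` maps the diagonal matrix on vertices of degree `d`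
in `G` to the diagonal matrix on vertices of degree `d` in `G′`. -/
theorem stmt_10 {V V2 : Type*} [Fintype V] [DecidableEq V] [Fintype V2] [DecidableEq V2]
    (G : SimpleGraph V) [DecidableRel G.Adj] (G2 : SimpleGraph V2) [DecidableRel G2.Adj]
    (W : Subalgebra ℂ (Matrix V V ℂ)) (W2 : Subalgebra ℂ (Matrix V2 V2 ℂ))
    (hW : IsCellular W) (hW2 : IsCellular W2)
    (hA : G.adjMatrix ℂ ∈ W)
    (hmin : ∀ W' : Subalgebra ℂ (Matrix V V ℂ),
      IsCellular W' → G.adjMatrix ℂ ∈ W' → W ≤ W')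
    (hA2 : G2.adjMatrix ℂ ∈ W2)
    (hmin2 : ∀ W' : Subalgebra ℂ (Matrix V2 V2 ℂ),
      IsCellular W' → G2.adjMatrix ℂ ∈ W' → W2 ≤ W')
    (f : Matrix V V ℂ → Matrix V2 V2 ℂ) (hf : IsWeakIso W W2 f)
    (hfA : f (G.adjMatrix ℂ) = G2.adjMatrix ℂ) (d : ℕ) :
    degIndicator G d ∈ W ∧ degIndicator G2 d ∈ W2 ∧
      f (degIndicator G d) = degIndicator G2 d := by
  obtain ⟨hbij, hadd, hsmul, hmul, hhad, -⟩ := hf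
  have hsurj := hbij.2.2
  -- the degree set
  set S : Finset ℂ :=
    (Finset.univ.image fun u => ((G.degree u : ℕ) : ℂ)) ∪
    (Finset.univ.image fun v => ((G2.degree v : ℕ) : ℂ)) with hS
  -- interpolating polynomial
  set p : Polynomial ℂ := ∏ s ∈ S.erase (d : ℂ),
      (Polynomial.C (((d : ℂ) - s)⁻¹) * (Polynomial.X - Polynomial.C s)) with hp
  have hevald : p.eval (d : ℂ) = 1 := by
    rw [hp, Polynomial.eval_prod]
    apply Finset.prod_eq_one
    intro s hs
    have hne : (d : ℂ) - s ≠ 0 := sub_ne_zero.mpr (Ne.symm (Finset.ne_of_mem_erase hs))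
    simp [inv_mul_cancel₀ hne]
  have heval0 : ∀ t ∈ S, t ≠ (d : ℂ) → p.eval t = 0 := by
    intro t ht htd
    rw [hp, Polynomial.eval_prod]
    apply Finset.prod_eq_zero (Finset.mem_erase.mpr ⟨htd, ht⟩)
    simp
  -- the two degree-diagonal matrices
  have hDdiag : (G.adjMatrix ℂ * G.adjMatrix ℂ) ⊙ (1 : Matrix V V ℂ)
      = Matrix.diagonal (fun u => ((G.degree u : ℕ) : ℂ)) := by
    rw [hadamard_one_eq_diag]
    have h : (fun u => (G.adjMatrix ℂ * G.adjMatrix ℂ) u u)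
        = fun u => ((G.degree u : ℕ) : ℂ) :=
      funext fun u => G.adjMatrix_mul_self_apply_self u
    rw [h]
  have hD2diag : (G2.adjMatrix ℂ * G2.adjMatrix ℂ) ⊙ (1 : Matrix V2 V2 ℂ)
      = Matrix.diagonal (fun u => ((G2.degree u : ℕ) : ℂ)) := by
    rw [hadamard_one_eq_diag]
    have h : (fun u => (G2.adjMatrix ℂ * G2.adjMatrix ℂ) u u)
        = fun u => ((G2.degree u : ℕ) : ℂ) :=
      funext fun u => G2.adjMatrix_mul_self_apply_self u
    rw [h]
  set D : Matrix V V ℂ := Matrix.diagonal (fun u => ((G.degree u : ℕ) : ℂ)) with hDdef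
  set D2 : Matrix V2 V2 ℂ := Matrix.diagonal (fun u => ((G2.degree u : ℕ) : ℂ)) with hD2def
  have hDW : D ∈ W := by
    rw [← hDdiag]; exact hW.1 _ (mul_mem hA hA) _ (one_mem W)
  have hD2W : D2 ∈ W2 := by
    rw [← hD2diag]; exact hW2.1 _ (mul_mem hA2 hA2) _ (one_mem W2)
  -- evaluation facts
  have hpevalG : ∀ u : V, p.eval ((G.degree u : ℕ) : ℂ) = if G.degree u = d then 1 else 0 := by
    intro u
    by_cases h : G.degree u = d
    · rw [h]; simp [hevald, h]
    · rw [if_neg h]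
      apply heval0
      · exact Finset.mem_union_left _ (Finset.mem_image_of_mem _ (Finset.mem_univ u))
      · exact_mod_cast fun hc => h (Nat.cast_injective hc)
  have hpevalG2 : ∀ u : V2, p.eval ((G2.degree u : ℕ) : ℂ) = if G2.degree u = d then 1 else 0 := by
    intro u
    by_cases h : G2.degree u = d
    · rw [h]; simp [hevald, h]
    · rw [if_neg h]
      apply heval0
      · exact Finset.mem_union_right _ (Finset.mem_image_of_mem _ (Finset.mem_univ u))
      · exact_mod_cast fun hc => h (Nat.cast_injective hc)
  have hIeq : degIndicator G d = Polynomial.aeval D p := by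
    rw [hDdef, aeval_diagonal']
    ext u v
    by_cases h : u = v <;>
      simp [degIndicator, Matrix.diagonal, h, hpevalG]
  have hI2eq : degIndicator G2 d = Polynomial.aeval D2 p := by
    rw [hD2def, aeval_diagonal']
    ext u v
    by_cases h : u = v <;>
      simp [degIndicator, Matrix.diagonal, h, hpevalG2]
  -- membership
  have hmemW : degIndicator G d ∈ W := by
    rw [hIeq, Polynomial.aeval_eq_sum_range]
    exact Subalgebra.sum_mem _ fun i _ => Subalgebra.smul_mem _ (pow_mem hDW i) _
  have hmemW2 : degIndicator G2 d ∈ W2 := by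
    rw [hI2eq, Polynomial.aeval_eq_sum_range]
    exact Subalgebra.sum_mem _ fun i _ => Subalgebra.smul_mem _ (pow_mem hD2W i) _
  refine ⟨hmemW, hmemW2, ?_⟩
  -- f 1 = 1 and f 0 = 0
  have hf1 : f 1 = 1 := by
    obtain ⟨x, hx, hfx⟩ := hsurj (show (1 : Matrix V2 V2 ℂ) ∈ (W2 : Set _) from one_mem W2)
    have := hmul x hx 1 (one_mem W)
    rw [mul_one, hfx] at this
    rw [← one_mul (f 1), ← this]
  have hf0 : f 0 = 0 := by
    have := hadd 0 (zero_mem W) 0 (zero_mem W)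
    rw [add_zero] at this
    exact left_eq_add.mp this
  -- f D = D2
  have hfD : f D = D2 := by
    rw [← hDdiag, ← hD2diag,
      hhad _ (mul_mem hA hA) _ (one_mem W), hmul _ hA _ hA, hfA, hf1]
  -- f (D^n) = D2^n
  have hfpow : ∀ n : ℕ, f (D ^ n) = D2 ^ n := by
    intro n
    induction n with
    | zero => simpa using hf1
    | succ n ih =>
        rw [pow_succ, hmul _ (pow_mem hDW n) _ hDW, ih, hfD, pow_succ]
  -- f of sums of scalar multiples of powers
  have hfsum : ∀ (n : ℕ) (c : ℕ → ℂ),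
      f (∑ i ∈ Finset.range n, c i • D ^ i) = ∑ i ∈ Finset.range n, c i • D2 ^ i := by
    intro n c
    induction n with
    | zero => simpa using hf0
    | succ n ih =>
        rw [Finset.sum_range_succ, Finset.sum_range_succ,
          hadd _ (Subalgebra.sum_mem _ fun i _ => Subalgebra.smul_mem _ (pow_mem hDW i) _)
            _ (Subalgebra.smul_mem _ (pow_mem hDW n) _),
          ih, hsmul _ _ (pow_mem hDW n), hfpow]
  rw [hIeq, hI2eq, Polynomial.aeval_eq_sum_range, Polynomial.aeval_eq_sum_range]
  exact hfsum _ _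
end

section
/- Let G and G′ be graphs with adjacency matrices A and A′ such that there is a weak isomorphism φ : [G] → [G′] with φ(A) = A′. Then for every t ∈ ℝ, the matrices e^{-itA} and e^{-itA′} have the same multiset of entry values: for each complex value z, the number of pairs (u,v) with (e^{-itA})_{uv} = z equals the number of pairs (u′,v′) with (e^{-itA′})_{u′v′} = z. -/
open Matrix

section Aux

set_option linter.unusedSectionVars false

variable {V V2 : Type*} [Fintype V] [DecidableEq V] [Fintype V2] [DecidableEq V2]
  {W : Subalgebra ℂ (Matrix V V ℂ)} {W2 : Subalgebra ℂ (Matrix V2 V2 ℂ)}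
  {f : Matrix V V ℂ → Matrix V2 V2 ℂ}

/-- A weak isomorphism extends to a continuous linear map on the whole matrix space. -/
lemma IsWeakIso.exists_linear_ext (hf : IsWeakIso W W2 f) :
    ∃ g : Matrix V V ℂ →ₗ[ℂ] Matrix V2 V2 ℂ, Continuous g ∧ ∀ X ∈ W, g X = f X := by
  set p := Subalgebra.toSubmodule W with hp
  obtain ⟨q, hq⟩ := Submodule.exists_isCompl p
  let e : p →ₗ[ℂ] Matrix V2 V2 ℂ :=
    { toFun := fun x => f x
      map_add' := by
        rintro ⟨x, hx⟩ ⟨y, hy⟩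
        exact hf.2.1 x hx y hy
      map_smul' := by
        rintro c ⟨x, hx⟩
        exact hf.2.2.1 c x hx }
  refine ⟨e.comp (Submodule.linearProjOfIsCompl p q hq), ?_, ?_⟩
  · exact LinearMap.continuous_of_finiteDimensional _
  · intro X hX
    have : Submodule.linearProjOfIsCompl p q hq X = ⟨X, hX⟩ :=
      Submodule.linearProjOfIsCompl_apply_left hq ⟨X, hX⟩
    simp [this, e]

lemma IsWeakIso.f_one (hf : IsWeakIso W W2 f) : f 1 = 1 := by
  obtain ⟨B, hB, hfB⟩ := hf.1.2.2 (W2.one_mem)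
  have h := hf.2.2.2.1 1 W.one_mem B hB
  rw [one_mul, hfB, mul_one] at h
  exact h.symm

lemma IsWeakIso.f_J (hf : IsWeakIso W W2 f) (hJ : allOnes V ∈ W) (hJ2 : allOnes V2 ∈ W2) :
    f (allOnes V) = allOnes V2 := by
  obtain ⟨B, hB, hfB⟩ := hf.1.2.2 hJ2
  have h := hf.2.2.2.2.1 (allOnes V) hJ B hB
  have hJB : allOnes V ⊙ B = B := by
    ext u v; simp [allOnes, Matrix.hadamard]
  rw [hJB, hfB] at h
  ext u v
  have := congrFun (congrFun h u) v
  simpa [allOnes, Matrix.hadamard] using this.symm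

lemma IsWeakIso.f_pow (hf : IsWeakIso W W2 f) {X : Matrix V V ℂ} (hX : X ∈ W) (n : ℕ) :
    f (X ^ n) = (f X) ^ n := by
  induction n with
  | zero => simpa using hf.f_one
  | succ n ih =>
      rw [pow_succ, hf.2.2.2.1 _ (pow_mem hX n) X hX, ih, pow_succ]

/-- iterated Hadamard power, with `hadPow X 0 = J`. -/
def hadPow (X : Matrix V V ℂ) : ℕ → Matrix V V ℂ
  | 0 => allOnes V
  | n + 1 => X ⊙ hadPow X n

lemma hadPow_apply (X : Matrix V V ℂ) (n : ℕ) (u v : V) :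
    hadPow X n u v = (X u v) ^ n := by
  induction n with
  | zero => simp [hadPow, allOnes]
  | succ n ih => rw [hadPow, Matrix.hadamard_apply, ih, pow_succ]; ring

lemma hadPow_mem (hHad : ∀ A ∈ W, ∀ B ∈ W, A ⊙ B ∈ W) (hJ : allOnes V ∈ W)
    {X : Matrix V V ℂ} (hX : X ∈ W) (n : ℕ) : hadPow X n ∈ W := by
  induction n with
  | zero => exact hJ
  | succ n ih => exact hHad X hX _ ih

lemma IsWeakIso.f_hadPow (hf : IsWeakIso W W2 f) (hW : IsCellular W) (hW2 : IsCellular W2)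
    {X : Matrix V V ℂ} (hX : X ∈ W) (n : ℕ) : f (hadPow X n) = hadPow (f X) n := by
  induction n with
  | zero => exact hf.f_J hW.2.2 hW2.2.2
  | succ n ih =>
      show f (X ⊙ hadPow X n) = f X ⊙ hadPow (f X) n
      rw [hf.2.2.2.2.1 X hX _ (hadPow_mem hW.1 hW.2.2 hX n), ih]

/-- entrywise polynomial evaluation -/
noncomputable def polyHad (p : Polynomial ℂ) (X : Matrix V V ℂ) : Matrix V V ℂ :=
  ∑ k ∈ Finset.range (p.natDegree + 1), p.coeff k • hadPow X k

lemma polyHad_apply (p : Polynomial ℂ) (X : Matrix V V ℂ) (u v : V) :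
    polyHad p X u v = p.eval (X u v) := by
  rw [Polynomial.eval_eq_sum_range, polyHad]
  rw [Matrix.sum_apply]
  refine Finset.sum_congr rfl fun k _ => ?_
  rw [Matrix.smul_apply, hadPow_apply, smul_eq_mul]

lemma polyHad_mem (hHad : ∀ A ∈ W, ∀ B ∈ W, A ⊙ B ∈ W) (hJ : allOnes V ∈ W)
    {X : Matrix V V ℂ} (hX : X ∈ W) (p : Polynomial ℂ) : polyHad p X ∈ W := by
  refine Subalgebra.sum_mem _ fun k _ => ?_
  exact SMulMemClass.smul_mem _ (hadPow_mem hHad hJ hX k)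

lemma IsWeakIso.f_polyHad (hf : IsWeakIso W W2 f) (hW : IsCellular W) (hW2 : IsCellular W2)
    {X : Matrix V V ℂ} (hX : X ∈ W) (p : Polynomial ℂ) :
    f (polyHad p X) = polyHad p (f X) := by
  obtain ⟨g, hgc, hg⟩ := hf.exists_linear_ext
  rw [← hg _ (polyHad_mem hW.1 hW.2.2 hX p), polyHad, map_sum, polyHad]
  refine Finset.sum_congr rfl fun k _ => ?_
  rw [_root_.map_smul, hg _ (hadPow_mem hW.1 hW.2.2 hX k), hf.f_hadPow hW hW2 hX k]

lemma J_mul_mul_J (X : Matrix V V ℂ) :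
    allOnes V * X * allOnes V = (∑ q : V × V, X q.1 q.2) • allOnes V := by
  ext u v
  simp only [Matrix.mul_apply, allOnes, Matrix.smul_apply, Matrix.of_apply, smul_eq_mul,
    mul_one, one_mul, Fintype.sum_prod_type]
  rw [Finset.sum_comm]

/-- A weak isomorphism preserves the sum of all entries. -/
lemma IsWeakIso.f_entrySum (hf : IsWeakIso W W2 f) (hW : IsCellular W) (hW2 : IsCellular W2)
    [Nonempty V2] {X : Matrix V V ℂ} (hX : X ∈ W) :
    ∑ q : V2 × V2, f X q.1 q.2 = ∑ q : V × V, X q.1 q.2 := by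
  have hJ := hW.2.2
  have hJ2 := hW2.2.2
  have hfJ := hf.f_J hJ hJ2
  have h1 : f (allOnes V * X * allOnes V) =
      (∑ q : V2 × V2, f X q.1 q.2) • allOnes V2 := by
    rw [hf.2.2.2.1 _ (mul_mem hJ hX) _ hJ, hf.2.2.2.1 _ hJ _ hX, hfJ, J_mul_mul_J]
  have h2 : f (allOnes V * X * allOnes V) =
      (∑ q : V × V, X q.1 q.2) • allOnes V2 := by
    rw [J_mul_mul_J, hf.2.2.1 _ _ hJ, hfJ]
  obtain ⟨v0⟩ := ‹Nonempty V2›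
  have := congrFun (congrFun (h1.symm.trans h2) v0) v0
  simpa [allOnes] using this

lemma exp_hasSum (X : Matrix V V ℂ) :
    HasSum (fun n : ℕ => ((n.factorial : ℂ))⁻¹ • X ^ n) (NormedSpace.exp X) := by
  letI := Matrix.linftyOpNormedRing (α := ℂ) (n := V)
  letI := Matrix.linftyOpNormedAlgebra (R := ℂ) (α := ℂ) (n := V)
  rw [NormedSpace.exp_eq_tsum ℂ]
  exact (NormedSpace.expSeries_summable' (𝕂 := ℂ) X).hasSum

lemma exp_mem {X : Matrix V V ℂ} (hX : X ∈ W) : NormedSpace.exp X ∈ W := by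
  have hclosed : IsClosed ((Subalgebra.toSubmodule W : Submodule ℂ (Matrix V V ℂ)) :
      Set (Matrix V V ℂ)) := Submodule.closed_of_finiteDimensional _
  exact hclosed.mem_of_tendsto (exp_hasSum X)
    (Filter.Eventually.of_forall fun s => Submodule.sum_mem _ fun n _ =>
      Submodule.smul_mem _ _ (by exact pow_mem hX n))

lemma IsWeakIso.f_exp (hf : IsWeakIso W W2 f) {X : Matrix V V ℂ} (hX : X ∈ W) :
    f (NormedSpace.exp X) = NormedSpace.exp (f X) := by
  obtain ⟨g, hgc, hg⟩ := hf.exists_linear_ext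
  have hs := (exp_hasSum X).map g hgc
  have heq : (⇑g ∘ fun n : ℕ => ((n.factorial : ℂ))⁻¹ • X ^ n) =
      fun n : ℕ => ((n.factorial : ℂ))⁻¹ • (f X) ^ n := by
    funext n
    simp only [Function.comp_apply, _root_.map_smul]
    rw [hg _ (pow_mem hX n), hf.f_pow hX n]
  rw [heq] at hs
  have key : NormedSpace.exp (f X) = g (NormedSpace.exp X) := by
    rw [NormedSpace.exp_eq_tsum ℂ]
    exact hs.tsum_eq
  rw [← hg _ (exp_mem hX)]
  exact key.symm

end Aux

/-- If `G` and `G′` are equivalent graphs, then for each `t` the matrices `e^{-itA}`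
and `e^{-itA′}` have the same multiset of entry values. -/
theorem stmt_11 {V V2 : Type*} [Fintype V] [DecidableEq V] [Fintype V2] [DecidableEq V2]
    (G : SimpleGraph V) [DecidableRel G.Adj] (G2 : SimpleGraph V2) [DecidableRel G2.Adj]
    (W : Subalgebra ℂ (Matrix V V ℂ)) (W2 : Subalgebra ℂ (Matrix V2 V2 ℂ))
    (hW : IsCellular W) (hW2 : IsCellular W2)
    (hA : G.adjMatrix ℂ ∈ W)
    (hmin : ∀ W' : Subalgebra ℂ (Matrix V V ℂ),
      IsCellular W' → G.adjMatrix ℂ ∈ W' → W ≤ W')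
    (hA2 : G2.adjMatrix ℂ ∈ W2)
    (hmin2 : ∀ W' : Subalgebra ℂ (Matrix V2 V2 ℂ),
      IsCellular W' → G2.adjMatrix ℂ ∈ W' → W2 ≤ W')
    (f : Matrix V V ℂ → Matrix V2 V2 ℂ) (hf : IsWeakIso W W2 f)
    (hfA : f (G.adjMatrix ℂ) = G2.adjMatrix ℂ) (t : ℝ) (z : ℂ) :
    Nat.card {p : V × V //
        NormedSpace.exp ((-Complex.I * t) • G.adjMatrix ℂ) p.1 p.2 = z} =
      Nat.card {p : V2 × V2 //
        NormedSpace.exp ((-Complex.I * t) • G2.adjMatrix ℂ) p.1 p.2 = z} := by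
  classical
  -- degenerate cases on emptiness
  by_cases hV : Nonempty V
  · by_cases hV2 : Nonempty V2
    · -- main case
      set M : Matrix V V ℂ := NormedSpace.exp ((-Complex.I * t) • G.adjMatrix ℂ) with hM
      set M2 : Matrix V2 V2 ℂ :=
        NormedSpace.exp ((-Complex.I * t) • G2.adjMatrix ℂ) with hM2
      have hXmem : (-Complex.I * t) • G.adjMatrix ℂ ∈ W :=
        Submodule.smul_mem (Subalgebra.toSubmodule W) _ hA
      have hMmem : M ∈ W := exp_mem hXmem
      have hfM : f M = M2 := by
        rw [hM, hf.f_exp hXmem, hf.2.2.1 _ _ hA, hfA, hM2]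
      -- the finite set of relevant values
      set S : Finset ℂ :=
        ((Finset.univ.image fun q : V × V => M q.1 q.2) ∪
          (Finset.univ.image fun q : V2 × V2 => M2 q.1 q.2)) ∪ {z} with hS
      set p : Polynomial ℂ :=
        Lagrange.interpolate S id (fun w => if w = z then 1 else 0) with hpdef
      have hpeval : ∀ w ∈ S, p.eval w = if w = z then 1 else 0 := by
        intro w hw
        exact Lagrange.eval_interpolate_at_node _ (Set.injOn_id _) hw
      have hMS : ∀ u v, M u v ∈ S := fun u v => by
        exact Finset.mem_union_left _ (Finset.mem_union_left _
          (Finset.mem_image_of_mem (fun q : V × V => M q.1 q.2) (Finset.mem_univ (u, v))))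
      have hM2S : ∀ u v, M2 u v ∈ S := fun u v => by
        exact Finset.mem_union_left _ (Finset.mem_union_right _
          (Finset.mem_image_of_mem (fun q : V2 × V2 => M2 q.1 q.2) (Finset.mem_univ (u, v))))
      set P : Matrix V V ℂ := polyHad p M with hP
      have hPmem : P ∈ W := polyHad_mem hW.1 hW.2.2 hMmem p
      have hPapp : ∀ u v, P u v = if M u v = z then 1 else 0 := by
        intro u v
        rw [hP, polyHad_apply, hpeval _ (hMS u v)]
      have hfP : f P = polyHad p M2 := by
        rw [hP, hf.f_polyHad hW hW2 hMmem, hfM]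
      have hfPapp : ∀ u v, f P u v = if M2 u v = z then 1 else 0 := by
        intro u v
        rw [hfP, polyHad_apply, hpeval _ (hM2S u v)]
      -- entry sums are preserved
      have hsum := hf.f_entrySum hW hW2 hPmem
      have hL : ∑ q : V × V, P q.1 q.2 =
          ((Finset.univ.filter fun q : V × V => M q.1 q.2 = z).card : ℂ) := by
        rw [← Finset.sum_boole]
        exact Finset.sum_congr rfl fun q _ => hPapp q.1 q.2
      have hR : ∑ q : V2 × V2, f P q.1 q.2 =
          ((Finset.univ.filter fun q : V2 × V2 => M2 q.1 q.2 = z).card : ℂ) := by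
        rw [← Finset.sum_boole]
        exact Finset.sum_congr rfl fun q _ => hfPapp q.1 q.2
      have hcard : ((Finset.univ.filter fun q : V × V => M q.1 q.2 = z).card : ℂ) =
          ((Finset.univ.filter fun q : V2 × V2 => M2 q.1 q.2 = z).card : ℂ) := by
        rw [← hL, ← hR, hsum]
      have hcardN : (Finset.univ.filter fun q : V × V => M q.1 q.2 = z).card =
          (Finset.univ.filter fun q : V2 × V2 => M2 q.1 q.2 = z).card :=
        Nat.cast_injective hcard
      rw [Nat.card_eq_fintype_card, Nat.card_eq_fintype_card,
        Fintype.card_subtype, Fintype.card_subtype]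
      exact hcardN
    · -- V nonempty, V2 empty: contradiction
      exfalso
      haveI : IsEmpty V2 := not_nonempty_iff.mp hV2
      have h01 : (0 : Matrix V V ℂ) = 1 := by
        refine hf.1.2.1 W.zero_mem W.one_mem ?_
        apply Subsingleton.elim
      obtain ⟨v⟩ := hV
      have := congrFun (congrFun h01 v) v
      simp [Matrix.one_apply_eq] at this
  · by_cases hV2 : Nonempty V2
    · -- V empty, V2 nonempty: contradiction
      exfalso
      haveI : IsEmpty V := not_nonempty_iff.mp hV
      obtain ⟨B, hB, hfB⟩ := hf.1.2.2 (W2.one_mem)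
      have hB0 : B = (0 : Matrix V V ℂ) := Subsingleton.elim _ _
      have hf0 : f 0 = 0 := by
        have h := hf.2.1 0 W.zero_mem 0 W.zero_mem
        rw [add_zero] at h
        exact (left_eq_add.mp h)
      rw [hB0, hf0] at hfB
      obtain ⟨v⟩ := hV2
      have := congrFun (congrFun hfB v) v
      simp [Matrix.one_apply_eq] at this
    · haveI : IsEmpty V := not_nonempty_iff.mp hV
      haveI : IsEmpty V2 := not_nonempty_iff.mp hV2
      simp [Nat.card_of_isEmpty]
end

section
/- Let W and W′ be cellular algebras with bases R and R′, let φ : W → W′ be a weak isomorphism, and let M ∈ W have real coefficients in the basis R. Then φ(S⁺(M)) = S⁺(φ(M)), where S⁺ denotes the positive support. Consequently, S⁺(M) and S⁺(φ(M)) are cospectral. -/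
open Matrix

/-- The positive support of a matrix: the 0-1 matrix indicating the entries that are
(strictly positive) real numbers. -/
noncomputable def posSupp {V : Type*} (M : Matrix V V ℂ) : Matrix V V ℂ :=
  Matrix.of fun u v => if 0 < (M u v).re ∧ (M u v).im = 0 then 1 else 0

namespace Stmt14Aux

section LinAlg

open Polynomial Module


variable {n : Type*} [Fintype n] [DecidableEq n]

/-- The endomorphism of `n → ℂ` given by a matrix. -/
noncomputable def matEnd (A : Matrix n n ℂ) : Module.End ℂ (n → ℂ) :=
  Matrix.toLinAlgEquiv' A

lemma charpoly_matEnd (A : Matrix n n ℂ) : (matEnd A).charpoly = A.charpoly := by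
  rw [← LinearMap.charpoly_toMatrix (matEnd A) (Pi.basisFun ℂ n),
    LinearMap.toMatrix_eq_toMatrix']
  congr 1
  exact LinearMap.toMatrix'_toLin' A

lemma trace_matEnd (A : Matrix n n ℂ) :
    LinearMap.trace ℂ (n → ℂ) (matEnd A) = A.trace := by
  rw [LinearMap.trace_eq_matrix_trace ℂ (Pi.basisFun ℂ n), LinearMap.toMatrix_eq_toMatrix']
  congr 1
  exact LinearMap.toMatrix'_toLin' A

/-- Algebraic multiplicity of `μ` as an eigenvalue of `A`. -/
noncomputable def amult (A : Matrix n n ℂ) (μ : ℂ) : ℕ :=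
  finrank ℂ ((matEnd A).maxGenEigenspace μ)

lemma finite_spec (A : Matrix n n ℂ) :
    {μ : ℂ | (matEnd A).maxGenEigenspace μ ≠ ⊥}.Finite :=
  WellFoundedGT.finite_ne_bot_of_iSupIndep (matEnd A).independent_maxGenEigenspace

/-- The finite set of eigenvalues of `A`. -/
noncomputable def espec (A : Matrix n n ℂ) : Finset ℂ := (finite_spec A).toFinset

lemma amult_eq_zero_of_not_mem {A : Matrix n n ℂ} {μ : ℂ} (h : μ ∉ espec A) :
    amult A μ = 0 := by
  have : (matEnd A).maxGenEigenspace μ = ⊥ := by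
    by_contra hb
    exact h ((finite_spec A).mem_toFinset.mpr hb)
  simp [amult, this]

lemma charpoly_shift (A : Matrix n n ℂ) (μ : ℂ) :
    (A - μ • 1).charpoly = A.charpoly.comp (X + C μ) := by
  have hcomp : ∀ p : ℂ[X], p.comp (X + C μ) = aeval (X + C μ) p := by
    intro p
    rw [Polynomial.comp, Polynomial.aeval_def, Polynomial.algebraMap_eq]
  rw [hcomp]
  have hmap : charmatrix (A - μ • 1) = (charmatrix A).map (aeval (X + C μ)) := by
    ext i j
    by_cases hij : i = j
    · subst hij
      simp [charmatrix_apply_eq, Matrix.sub_apply, Matrix.smul_apply, Matrix.one_apply_eq,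
        Polynomial.C_sub, smul_eq_mul, mul_one]
      ring
    · simp [charmatrix_apply_ne _ _ _ hij, Matrix.sub_apply, Matrix.smul_apply,
        Matrix.one_apply_ne hij, hij]
  rw [Matrix.charpoly, hmap, Matrix.charpoly]
  exact (RingHom.map_det (aeval (X + C μ)).toRingHom (charmatrix A)).symm

lemma maxGen_shift (A : Matrix n n ℂ) (μ : ℂ) :
    (matEnd (A - μ • 1)).maxGenEigenspace 0 = (matEnd A).maxGenEigenspace μ := by
  have h : matEnd (A - μ • 1) = matEnd A - μ • 1 := by
    simp [matEnd, map_sub, _root_.map_smul, _root_.map_one]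
  ext x
  rw [h, Module.End.mem_maxGenEigenspace, Module.End.mem_maxGenEigenspace]
  simp [zero_smul, sub_zero]

lemma count_roots_charpoly (A : Matrix n n ℂ) (μ : ℂ) :
    A.charpoly.roots.count μ = amult A μ := by
  rw [Polynomial.count_roots, Polynomial.rootMultiplicity_eq_natTrailingDegree,
    ← charpoly_shift A μ, ← charpoly_matEnd (A - μ • 1),
    ← LinearMap.finrank_maxGenEigenspace_zero_eq, amult, maxGen_shift]

variable {E : Type*} [AddCommGroup E] [Module ℂ E] [FiniteDimensional ℂ E]

lemma trace_restrict_pow (φ : Module.End ℂ E) (μ : ℂ) (k : ℕ)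
    (h : Set.MapsTo (φ ^ k) (φ.maxGenEigenspace μ) (φ.maxGenEigenspace μ)) :
    LinearMap.trace ℂ _ ((φ ^ k).restrict h) =
      μ ^ k * (finrank ℂ (φ.maxGenEigenspace μ) : ℂ) := by
  set p := φ.maxGenEigenspace μ with hp
  have hφp : ∀ x ∈ p, φ x ∈ p := φ.mapsTo_maxGenEigenspace_of_comm rfl μ
  have hcomm : Commute φ (φ - μ • 1) := by
    refine (Commute.refl φ).sub_right ?_
    exact (Commute.one_right φ).smul_right μ
  have hsub : ∀ x ∈ p, (φ - μ • 1) x ∈ p := φ.mapsTo_maxGenEigenspace_of_comm hcomm μ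
  set ν := (φ - μ • 1).restrict hsub with hν
  have hnil : IsNilpotent ν := by
    refine ⟨finrank ℂ E, ?_⟩
    ext x
    have hx : ((φ - μ • 1) ^ finrank ℂ E) (x : E) = 0 := by
      have hmem : (x : E) ∈ φ.genEigenspace μ (finrank ℂ E) := by
        rw [← Module.End.maxGenEigenspace_eq_genEigenspace_finrank]
        exact x.2
      rwa [Module.End.mem_genEigenspace_nat] at hmem
    rw [hν, Module.End.pow_restrict, LinearMap.zero_apply, ZeroMemClass.coe_zero,
      LinearMap.restrict_coe_apply, hx]
  have hρ : (φ ^ k).restrict h = (μ • (1 : Module.End ℂ p) + ν) ^ k := by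
    rw [← Module.End.pow_restrict k hφp]
    congr 1
    ext x
    simp only [LinearMap.restrict_coe_apply, LinearMap.add_apply, LinearMap.smul_apply,
      Module.End.one_apply, hν, Submodule.coe_add, Submodule.coe_smul, LinearMap.sub_apply]
    simp
  rw [hρ]
  have hc : Commute (μ • (1 : Module.End ℂ p)) ν :=
    (Commute.one_left ν).smul_left μ
  rw [hc.add_pow]
  rw [map_sum]
  rw [Finset.sum_eq_single_of_mem k (Finset.self_mem_range_succ k)]
  · simp only [Nat.sub_self, pow_zero, Nat.choose_self, Nat.cast_one, mul_one]
    rw [_root_.smul_pow, one_pow, LinearMap.map_smul, LinearMap.trace_one, smul_eq_mul]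
  · intro j hj hjk
    have hjr := Finset.mem_range.mp hj
    have h1 : IsNilpotent (ν ^ (k - j)) := hnil.pow_of_pos (by omega)
    have h3 : LinearMap.trace ℂ p (ν ^ (k - j)) = 0 :=
      (LinearMap.isNilpotent_trace_of_isNilpotent h1).eq_zero
    rw [_root_.smul_pow, one_pow, smul_mul_assoc, one_mul, ← nsmul_eq_mul',
      map_nsmul, LinearMap.map_smul, h3, smul_zero, smul_zero]

lemma trace_pow_eq (A : Matrix n n ℂ) (k : ℕ) :
    (A ^ k).trace = ∑ μ ∈ espec A, μ ^ k * (amult A μ : ℂ) := by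
  classical
  have hint : DirectSum.IsInternal (matEnd A).maxGenEigenspace :=
    DirectSum.isInternal_submodule_of_iSupIndep_of_iSup_eq_top
      (matEnd A).independent_maxGenEigenspace
      (Module.End.iSup_maxGenEigenspace_eq_top (matEnd A))
  have hmaps : ∀ μ : ℂ, Set.MapsTo (⇑(matEnd A ^ k))
      ((matEnd A).maxGenEigenspace μ) ((matEnd A).maxGenEigenspace μ) :=
    fun μ => (matEnd A).mapsTo_maxGenEigenspace_of_comm (Commute.pow_right rfl k) μ
  have h1 : matEnd (A ^ k) = (matEnd A) ^ k := map_pow _ _ _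
  rw [← trace_matEnd (A ^ k), h1,
    LinearMap.trace_eq_sum_trace_restrict' hint (finite_spec A) hmaps]
  exact Finset.sum_congr rfl fun μ _ => trace_restrict_pow (matEnd A) μ k (hmaps μ)

lemma vanish_of_powsum_zero {F : Finset ℂ} {c : ℂ → ℂ}
    (h : ∀ k : ℕ, ∑ μ ∈ F, c μ * μ ^ k = 0) : ∀ μ ∈ F, c μ = 0 := by
  classical
  intro ν hν
  have hinj : Set.InjOn id (F : Set ℂ) := Function.injective_id.injOn
  set P := Lagrange.basis F id ν with hP
  have hcv : c ν = ∑ μ ∈ F, c μ * P.eval μ := by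
    rw [Finset.sum_eq_single_of_mem ν hν]
    · rw [hP]
      have := Lagrange.eval_basis_self hinj hν
      simp only [id] at this
      rw [this, mul_one]
    · intro μ hμ hne
      have := Lagrange.eval_basis_of_ne (v := id) (Ne.symm hne) hμ
      simp only [id] at this
      rw [hP, this, mul_zero]
  have hswap : ∑ μ ∈ F, c μ * P.eval μ = 0 := by
    have heval : ∀ μ : ℂ, P.eval μ = ∑ j ∈ Finset.range (P.natDegree + 1), P.coeff j * μ ^ j :=
      fun μ => Polynomial.eval_eq_sum_range (p := P) μ
    calc ∑ μ ∈ F, c μ * P.eval μ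
        = ∑ μ ∈ F, ∑ j ∈ Finset.range (P.natDegree + 1), P.coeff j * (c μ * μ ^ j) := by
          refine Finset.sum_congr rfl fun μ _ => ?_
          rw [heval μ, Finset.mul_sum]
          exact Finset.sum_congr rfl fun j _ => by ring
      _ = ∑ j ∈ Finset.range (P.natDegree + 1), P.coeff j * ∑ μ ∈ F, c μ * μ ^ j := by
          rw [Finset.sum_comm]
          exact Finset.sum_congr rfl fun j _ => by rw [Finset.mul_sum]
      _ = 0 := by
          refine Finset.sum_eq_zero fun j _ => ?_
          rw [h j, mul_zero]
  rw [hcv, hswap]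

lemma charpoly_eq_of_trace_pow {m : Type*} [Fintype m] [DecidableEq m]
    (A : Matrix n n ℂ) (B : Matrix m m ℂ)
    (h : ∀ k : ℕ, (A ^ k).trace = (B ^ k).trace) :
    B.charpoly = A.charpoly := by
  classical
  have hd : ∀ μ : ℂ, amult A μ = amult B μ := by
    have hsum : ∀ k : ℕ,
        ∑ μ ∈ espec A ∪ espec B, ((amult A μ : ℂ) - (amult B μ : ℂ)) * μ ^ k = 0 := by
      intro k
      have hA : ∑ μ ∈ espec A ∪ espec B, (amult A μ : ℂ) * μ ^ k = (A ^ k).trace := by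
        rw [trace_pow_eq,
          Finset.sum_subset (Finset.subset_union_left : espec A ⊆ espec A ∪ espec B)
            (fun μ _ hμ => by rw [amult_eq_zero_of_not_mem hμ, Nat.cast_zero, mul_zero])]
        exact Finset.sum_congr rfl fun μ _ => mul_comm _ _
      have hB : ∑ μ ∈ espec A ∪ espec B, (amult B μ : ℂ) * μ ^ k = (B ^ k).trace := by
        rw [trace_pow_eq,
          Finset.sum_subset (Finset.subset_union_right : espec B ⊆ espec A ∪ espec B)
            (fun μ _ hμ => by rw [amult_eq_zero_of_not_mem hμ, Nat.cast_zero, mul_zero])]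
        exact Finset.sum_congr rfl fun μ _ => mul_comm _ _
      have : ∑ μ ∈ espec A ∪ espec B, ((amult A μ : ℂ) - (amult B μ : ℂ)) * μ ^ k
          = (∑ μ ∈ espec A ∪ espec B, (amult A μ : ℂ) * μ ^ k)
            - ∑ μ ∈ espec A ∪ espec B, (amult B μ : ℂ) * μ ^ k := by
        rw [← Finset.sum_sub_distrib]
        exact Finset.sum_congr rfl fun μ _ => by ring
      rw [this, hA, hB, h k, sub_self]
    have hvan := vanish_of_powsum_zero hsum
    intro μ
    by_cases hμ : μ ∈ espec A ∪ espec B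
    · have h0 := hvan μ hμ
      have : (amult A μ : ℂ) = (amult B μ : ℂ) := by
        have := sub_eq_zero.mp h0
        exact this
      exact_mod_cast this
    · rw [amult_eq_zero_of_not_mem fun hc => hμ (Finset.mem_union_left _ hc),
        amult_eq_zero_of_not_mem fun hc => hμ (Finset.mem_union_right _ hc)]
  have hr : B.charpoly.roots = A.charpoly.roots := by
    refine Multiset.ext.mpr fun μ => ?_
    rw [count_roots_charpoly, count_roots_charpoly, hd μ]
  rw [(IsAlgClosed.splits B.charpoly).eq_prod_roots_of_monic B.charpoly_monic,
    (IsAlgClosed.splits A.charpoly).eq_prod_roots_of_monic A.charpoly_monic, hr]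


/-- The sandwich identity extracting the trace. -/
lemma sandwich {n : Type*} [Fintype n] [DecidableEq n] (X : Matrix n n ℂ) :
    allOnes n * (X ⊙ 1) * allOnes n = X.trace • allOnes n := by
  rw [Matrix.hadamard_one]
  ext u v
  rw [Matrix.smul_apply, Matrix.mul_apply]
  have hrow : ∀ l, (allOnes n * Matrix.diagonal X.diag) u l = X l l := by
    intro l
    rw [Matrix.mul_diagonal]
    simp [allOnes]
  simp only [hrow]
  simp [allOnes, Matrix.trace, Matrix.diag, smul_eq_mul]


end LinAlg

end Stmt14Aux

/-- A weak isomorphism commutes with the positive support of elements with real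
coefficients; consequently `S⁺(M)` and `S⁺(φ(M))` are cospectral. -/
theorem stmt_14 {V V2 : Type*} [Fintype V] [DecidableEq V] [Fintype V2] [DecidableEq V2]
    (W : Subalgebra ℂ (Matrix V V ℂ)) (W2 : Subalgebra ℂ (Matrix V2 V2 ℂ))
    (hW : IsCellular W) (hW2 : IsCellular W2)
    (R : Finset (Matrix V V ℂ)) (hR : IsStdBasis W R)
    (R2 : Finset (Matrix V2 V2 ℂ)) (hR2 : IsStdBasis W2 R2)
    (f : Matrix V V ℂ → Matrix V2 V2 ℂ) (hf : IsWeakIso W W2 f)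
    (M : Matrix V V ℂ) (a : Matrix V V ℂ → ℝ)
    (hM : M = ∑ N ∈ R, (a N : ℂ) • N) :
    f (posSupp M) = posSupp (f M) ∧
      (posSupp (f M)).charpoly = (posSupp M).charpoly := by
  classical
  obtain ⟨h01, hRW, _hLI, _hspan, hRsum⟩ := hR
  obtain ⟨hbij, hadd, hsmul, hmul, fhad, _hconj⟩ := hf
  have hNW : ∀ N ∈ R, N ∈ W := fun N hN => hRW hN
  have hf0 : f 0 = 0 := by
    have h := hadd 0 (zero_mem W) 0 (zero_mem W)
    rw [add_zero] at h
    exact (left_eq_add.mp h)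
  have hfsum : ∀ (s : Finset (Matrix V V ℂ)) (g : Matrix V V ℂ → Matrix V V ℂ),
      (∀ N ∈ s, g N ∈ W) → f (∑ N ∈ s, g N) = ∑ N ∈ s, f (g N) := by
    intro s
    induction s using Finset.induction_on with
    | empty => intro g _; simpa using hf0
    | insert _ _ hx ih =>
      intro g hg
      rw [Finset.sum_insert hx,
        hadd _ (hg _ (Finset.mem_insert_self _ _))
          _ (sum_mem fun N hN => hg N (Finset.mem_insert_of_mem hN)),
        ih g (fun N hN => hg N (Finset.mem_insert_of_mem hN)), Finset.sum_insert hx]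
  have hMW : M ∈ W := by
    rw [hM]; exact sum_mem fun N hN => W.smul_mem (hNW N hN) _
  have hsum_entry : ∀ u v : V, ∑ N ∈ R, N u v = 1 := by
    intro u v
    have h := congrFun (congrFun hRsum u) v
    rw [Matrix.sum_apply] at h
    exact h
  have huniq : ∀ (u v : V) (N₀ : Matrix V V ℂ), N₀ ∈ R → N₀ u v = 1 →
      ∀ N ∈ R, N ≠ N₀ → N u v = 0 := by
    intro u v N₀ hN₀ h1 N hN hne
    rcases h01 N hN u v with h | h
    · exact h
    · exfalso
      have hre : ∀ N' ∈ R, 0 ≤ (N' u v).re := by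
        intro N' hN'
        rcases h01 N' hN' u v with h' | h' <;> simp [h']
      have hsumre : ∑ N' ∈ R, (N' u v).re = 1 := by
        have := congrArg Complex.re (hsum_entry u v)
        rwa [Complex.re_sum] at this
      have hpair : ({N, N₀} : Finset (Matrix V V ℂ)) ⊆ R := by
        intro x hx
        rcases Finset.mem_insert.mp hx with rfl | hx
        · exact hN
        · rw [Finset.mem_singleton.mp hx]; exact hN₀
      have hle : ∑ N' ∈ ({N, N₀} : Finset (Matrix V V ℂ)), (N' u v).re
          ≤ ∑ N' ∈ R, (N' u v).re :=
        Finset.sum_le_sum_of_subset_of_nonneg hpair fun N' hN' _ => hre N' hN'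
      rw [Finset.sum_pair hne, h, h1, hsumre] at hle
      norm_num at hle
  have hex : ∀ u v : V, ∃ N₀ ∈ R, N₀ u v = 1 := by
    intro u v
    by_contra hc
    push_neg at hc
    have h0 : ∑ N ∈ R, N u v = 0 :=
      Finset.sum_eq_zero fun N hN => (h01 N hN u v).resolve_right (hc N hN)
    rw [hsum_entry u v] at h0
    exact one_ne_zero h0
  set Rp := R.filter (fun N => 0 < a N) with hRp
  have hMentry : ∀ (u v : V) (N₀ : Matrix V V ℂ), N₀ ∈ R → N₀ u v = 1 →
      M u v = (a N₀ : ℂ) := by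
    intro u v N₀ hN₀R hN₀
    rw [hM, Matrix.sum_apply, Finset.sum_eq_single_of_mem N₀ hN₀R]
    · simp [Matrix.smul_apply, hN₀]
    · intro N hN hne
      simp [Matrix.smul_apply, huniq u v N₀ hN₀R hN₀ N hN hne]
  have hposW : posSupp M = ∑ N ∈ Rp, N := by
    ext u v
    obtain ⟨N₀, hN₀R, hN₀⟩ := hex u v
    have hMuv := hMentry u v N₀ hN₀R hN₀
    have hL : posSupp M u v = if 0 < a N₀ then 1 else 0 := by
      simp [posSupp, hMuv]
    have hR' : (∑ N ∈ Rp, N) u v = if 0 < a N₀ then 1 else 0 := by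
      rw [Matrix.sum_apply]
      by_cases hp : 0 < a N₀
      · rw [if_pos hp,
          Finset.sum_eq_single_of_mem N₀ (Finset.mem_filter.mpr ⟨hN₀R, hp⟩), hN₀]
        intro N hN hne
        exact huniq u v N₀ hN₀R hN₀ N (Finset.filter_subset _ _ hN) hne
      · rw [if_neg hp]
        refine Finset.sum_eq_zero fun N hN => ?_
        have hne : N ≠ N₀ := by
          rintro rfl
          exact hp (Finset.mem_filter.mp hN).2
        exact huniq u v N₀ hN₀R hN₀ N (Finset.filter_subset _ _ hN) hne
    rw [hL, hR']
  have hposWmem : posSupp M ∈ W := by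
    rw [hposW]
    exact sum_mem fun N hN => hNW N (Finset.filter_subset _ _ hN)
  have hf01 : ∀ N ∈ R, Is01 (f N) := by
    intro N hN u v
    have hNN : N ⊙ N = N := by
      ext i j
      rcases h01 N hN i j with h | h <;> simp [Matrix.hadamard_apply, h]
    have hF := fhad N (hNW N hN) N (hNW N hN)
    rw [hNN] at hF
    have hx : f N u v = f N u v * f N u v := by
      conv_lhs => rw [hF]
      rw [Matrix.hadamard_apply]
    have h2 : f N u v * (f N u v - 1) = 0 := by linear_combination -hx
    rcases mul_eq_zero.mp h2 with h | h
    · exact Or.inl h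
    · exact Or.inr (sub_eq_zero.mp h)
  have hdis2 : ∀ N ∈ R, ∀ N' ∈ R, N ≠ N' → ∀ u v : V2, f N u v = 0 ∨ f N' u v = 0 := by
    intro N hN N' hN' hne u v
    have hprod : N ⊙ N' = 0 := by
      ext i j
      rcases h01 N' hN' i j with h | h
      · simp [Matrix.hadamard_apply, h]
      · simp [Matrix.hadamard_apply, huniq i j N' hN' h N hN hne]
    have hF := fhad N (hNW N hN) N' (hNW N' hN')
    rw [hprod, hf0] at hF
    have h0 : f N u v * f N' u v = 0 := by
      have := congrFun (congrFun hF u) v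
      rw [Matrix.hadamard_apply] at this
      exact this.symm
    exact mul_eq_zero.mp h0
  have hfM : f M = ∑ N ∈ R, (a N : ℂ) • f N := by
    rw [hM, hfsum R (fun N => (a N : ℂ) • N)
      (fun N hN => W.smul_mem (hNW N hN) _)]
    exact Finset.sum_congr rfl fun N hN => hsmul (a N) N (hNW N hN)
  have hfpos : f (posSupp M) = ∑ N ∈ Rp, f N := by
    rw [hposW, hfsum Rp (fun N => N) (fun N hN => hNW N (Finset.filter_subset _ _ hN))]
  have hkey : posSupp (f M) = ∑ N ∈ Rp, f N := by
    ext u v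
    by_cases hex2 : ∃ N₀ ∈ R, f N₀ u v = 1
    · obtain ⟨N₀, hN₀R, h1⟩ := hex2
      have hz : ∀ N ∈ R, N ≠ N₀ → f N u v = 0 := by
        intro N hN hne
        rcases hdis2 N hN N₀ hN₀R hne u v with h | h
        · exact h
        · exact absurd h (by rw [h1]; exact one_ne_zero)
      have hMv : (f M) u v = (a N₀ : ℂ) := by
        rw [hfM, Matrix.sum_apply, Finset.sum_eq_single_of_mem N₀ hN₀R]
        · simp [Matrix.smul_apply, h1]
        · intro N hN hne
          simp [Matrix.smul_apply, hz N hN hne]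
      have hL : posSupp (f M) u v = if 0 < a N₀ then 1 else 0 := by
        simp [posSupp, hMv]
      have hR' : (∑ N ∈ Rp, f N) u v = if 0 < a N₀ then 1 else 0 := by
        rw [Matrix.sum_apply]
        by_cases hp : 0 < a N₀
        · rw [if_pos hp,
            Finset.sum_eq_single_of_mem N₀ (Finset.mem_filter.mpr ⟨hN₀R, hp⟩), h1]
          intro N hN hne
          exact hz N (Finset.filter_subset _ _ hN) hne
        · rw [if_neg hp]
          refine Finset.sum_eq_zero fun N hN => ?_
          have hne : N ≠ N₀ := by
            rintro rfl
            exact hp (Finset.mem_filter.mp hN).2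
          exact hz N (Finset.filter_subset _ _ hN) hne
      rw [hL, hR']
    · push_neg at hex2
      have hz : ∀ N ∈ R, f N u v = 0 := fun N hN =>
        (hf01 N hN u v).resolve_right (hex2 N hN)
      have hMv : (f M) u v = 0 := by
        rw [hfM, Matrix.sum_apply]
        exact Finset.sum_eq_zero fun N hN => by simp [Matrix.smul_apply, hz N hN]
      have hL : posSupp (f M) u v = 0 := by simp [posSupp, hMv]
      have hR' : (∑ N ∈ Rp, f N) u v = 0 := by
        rw [Matrix.sum_apply]
        exact Finset.sum_eq_zero fun N hN => hz N (Finset.filter_subset _ _ hN)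
      rw [hL, hR']
  have comp1 : f (posSupp M) = posSupp (f M) := by rw [hfpos, hkey]
  refine ⟨comp1, ?_⟩
  by_cases hV2 : Nonempty V2
  · by_cases hV : Nonempty V
    · -- main case: both nonempty
      have hfone : f 1 = 1 := by
        obtain ⟨Y, hY, hfY⟩ := hbij.surjOn (show (1 : Matrix V2 V2 ℂ) ∈ (W2 : Set _) from one_mem W2)
        have h := hmul 1 (one_mem W) Y hY
        rw [one_mul, hfY, mul_one] at h
        exact h.symm
      have hfJ : f (allOnes V) = allOnes V2 := by
        obtain ⟨Y, hY, hfY⟩ := hbij.surjOn (show allOnes V2 ∈ (W2 : Set _) from hW2.2.2)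
        have h1 : allOnes V ⊙ Y = Y := by
          ext u v
          simp [Matrix.hadamard_apply, allOnes]
        have h := fhad (allOnes V) hW.2.2 Y hY
        rw [h1, hfY] at h
        ext u v
        have h2 := congrFun (congrFun h u) v
        rw [Matrix.hadamard_apply] at h2
        simp only [allOnes, Matrix.of_apply] at h2 ⊢
        rw [mul_one] at h2
        exact h2.symm
      have htr : ∀ X ∈ W, (f X).trace = X.trace := by
        intro X hX
        have hXh1 : X ⊙ 1 ∈ W := hW.1 X hX 1 (one_mem W)
        have e1 : f (allOnes V * (X ⊙ 1) * allOnes V)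
            = allOnes V2 * (f X ⊙ 1) * allOnes V2 := by
          rw [hmul _ (mul_mem hW.2.2 hXh1) _ hW.2.2,
            hmul _ hW.2.2 _ hXh1, hfJ, fhad X hX 1 (one_mem W), hfone]
        have e2 : f (X.trace • allOnes V) = X.trace • allOnes V2 := by
          rw [hsmul _ _ hW.2.2, hfJ]
        have e3 := Stmt14Aux.sandwich X
        have e4 := Stmt14Aux.sandwich (f X)
        have e5 : (f X).trace • allOnes V2 = X.trace • allOnes V2 := by
          rw [← e4, ← e1, e3, e2]
        obtain ⟨u⟩ := hV2
        have h6 := congrFun (congrFun e5 u) u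
        simp only [Matrix.smul_apply, allOnes, Matrix.of_apply, smul_eq_mul, mul_one] at h6
        exact h6
      have hApow : ∀ k : ℕ, f (posSupp M ^ k) = (f (posSupp M)) ^ k := by
        intro k
        induction k with
        | zero => simpa using hfone
        | succ k ih =>
          rw [pow_succ, hmul _ (pow_mem hposWmem k) _ hposWmem, ih, pow_succ]
      have htrk : ∀ k : ℕ, ((posSupp M) ^ k).trace = ((f (posSupp M)) ^ k).trace := by
        intro k
        rw [← hApow k]
        exact (htr _ (pow_mem hposWmem k)).symm
      have := Stmt14Aux.charpoly_eq_of_trace_pow (posSupp M) (f (posSupp M)) htrk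
      rw [← comp1]
      exact this
    · -- V empty, V2 nonempty: contradiction
      exfalso
      have hV' : IsEmpty V := not_nonempty_iff.mp hV
      obtain ⟨X1, hX1, hfX1⟩ := hbij.surjOn (show allOnes V2 ∈ (W2 : Set _) from hW2.2.2)
      obtain ⟨X2, hX2, hfX2⟩ := hbij.surjOn (show (0 : Matrix V2 V2 ℂ) ∈ (W2 : Set _) from zero_mem W2)
      have hXeq : X1 = X2 := by
        ext i j
        exact (hV'.false i).elim
      have h0 : allOnes V2 = 0 := by rw [← hfX1, hXeq, hfX2]
      obtain ⟨u⟩ := hV2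
      have := congrFun (congrFun h0 u) u
      simp [allOnes] at this
  · -- V2 empty
    have hV2' : IsEmpty V2 := not_nonempty_iff.mp hV2
    by_cases hV : Nonempty V
    · exfalso
      have hJ0 : allOnes V = 0 := by
        refine hbij.injOn hW.2.2 (zero_mem W) ?_
        ext i j
        exact (hV2'.false i).elim
      obtain ⟨u⟩ := hV
      have := congrFun (congrFun hJ0 u) u
      simp [allOnes] at this
    · have hV' : IsEmpty V := not_nonempty_iff.mp hV
      rw [Matrix.charpoly, Matrix.det_eq_one_of_card_eq_zero (by simp),
        Matrix.charpoly, Matrix.det_eq_one_of_card_eq_zero (by simp)]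
end
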